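/- Fix positive integers n and b, a frequency vector f : Fin n → ℕ with total mass m = Σ_y f(y), and for a hash function h : Fin n → Fin b define the counter table T_h : Fin b → ℕ by T_h(j) = Σ_{y : h(y) = j} f(y). Then: (i) for every function h : Fin n → Fin b and every x ∈ Fin n, T_h(h(x)) ≥ f(x); and (ii) if μ is a probability distribution on functions h : Fin n → Fin b with collision probability at most 1/b, then for every x ∈ Fin n, the expectation E_{h∼μ}[T_h(h(x))] is at most f(x) + m/b (as real numbers). -/

import Mathlib

open scoped BigOperators

/-- The counter table of a Count-Min row: `cmTable n b f h j` is the total frequency of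
all items hashed by `h` to bin `j`. -/
def cmTable (n b : ℕ) (f : Fin n → ℕ) (h : Fin n → Fin b) (j : Fin b) : ℕ :=
  ∑ y ∈ Finset.univ.filter (fun y => h y = j), f y

/-- Single-row analysis of the Count-Min sketch: (i) the counter at `h x` always
overestimates the frequency of `x`; (ii) if `h` is drawn from a distribution with
collision probability at most `1/b`, the expected counter at `h x` is at most
`f x + m/b`, where `m` is the total mass. -/
theorem count_min_single_row (n b : ℕ) (hn : 0 < n) (hb : 0 < b) (f : Fin n → ℕ) :
    (∀ (h : Fin n → Fin b) (x : Fin n), f x ≤ cmTable n b f h (h x)) ∧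
    (∀ μ : (Fin n → Fin b) → ℝ, (∀ h, 0 ≤ μ h) → (∑ h : Fin n → Fin b, μ h) = 1 →
      (∀ x y : Fin n, x ≠ y →
        (∑ h : Fin n → Fin b, if h x = h y then μ h else 0) ≤ 1 / (b : ℝ)) →
      ∀ x : Fin n,
        (∑ h : Fin n → Fin b, μ h * (cmTable n b f h (h x) : ℝ)) ≤
          (f x : ℝ) + ((∑ y : Fin n, f y : ℕ) : ℝ) / (b : ℝ)) := by
  constructor
  · intro h x
    apply Finset.single_le_sum (f := fun y => f y)
    · intro i _; exact Nat.zero_le _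
    · simp
  · intro μ hμ hsum hcol x
    have hb' : (0:ℝ) < b := by exact_mod_cast hb
    have key : ∀ h : Fin n → Fin b,
        μ h * (cmTable n b f h (h x) : ℝ)
          = ∑ y : Fin n, (if h y = h x then μ h * f y else 0) := by
      intro h
      simp only [cmTable, Nat.cast_sum, Finset.mul_sum, Finset.sum_filter]
      congr 1; funext y; split <;> simp
    simp only [key]
    rw [Finset.sum_comm]
    have step : ∀ y : Fin n,
        (∑ h : Fin n → Fin b, if h y = h x then μ h * f y else 0)
          = (f y : ℝ) * ∑ h : Fin n → Fin b, (if h y = h x then μ h else 0) := by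
      intro y
      rw [Finset.mul_sum]
      congr 1; funext h; split <;> ring
    simp only [step]
    rw [Finset.sum_eq_add_sum_sdiff_singleton_of_mem (Finset.mem_univ x)]
    have hx : (f x : ℝ) * (∑ h : Fin n → Fin b, if h x = h x then μ h else 0) = f x := by
      simp [hsum]
    rw [hx]
    gcongr
    calc (∑ y ∈ Finset.univ \ {x},
            (f y : ℝ) * ∑ h : Fin n → Fin b, (if h y = h x then μ h else 0))
        ≤ ∑ y ∈ Finset.univ \ {x}, (f y : ℝ) * (1 / b) := by
          apply Finset.sum_le_sum
          intro y hy
          have hyx : y ≠ x := by simpa using hy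
          exact mul_le_mul_of_nonneg_left (hcol y x hyx) (by positivity)
      _ = (∑ y ∈ Finset.univ \ {x}, (f y : ℝ)) / b := by
          rw [Finset.sum_div]; congr 1; funext y; ring
      _ ≤ ((∑ y : Fin n, f y : ℕ) : ℝ) / b := by
          gcongr
          push_cast
          exact Finset.sum_le_sum_of_subset_of_nonneg (Finset.subset_univ _)
            (fun i _ _ => by positivity)
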